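/- Let G be a linearly ordered commutative group and X a set. For V ⊆ (X → G) define the polar V^⊥ := {f : X → G | for all v ∈ V and all x ∈ X, |f(x)| ⊓ |v(x)| = 1}. Then V^⊥ is a 𝒦-kernel: for every g : X → G, if g(x) = 1 for every x ∈ X at which all f ∈ V^⊥ satisfy f(x) = 1 (i.e. Skel(V^⊥) ⊆ Skel(g)), then g ∈ V^⊥. Equivalently, Ker(Skel(V^⊥)) = V^⊥. -/

import Mathlib

/-- The skeleton of a set `S` of functions `X → G`. -/
def Skel {X G : Type*} [One G] (S : Set (X → G)) : Set X :=
  {x : X | ∀ f ∈ S, f x = 1}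

/-- The kernel of a subset `Z` of `X`: all functions taking the value `1` on `Z`. -/
def Ker {X G : Type*} [One G] (Z : Set X) : Set (X → G) :=
  {f : X → G | ∀ a ∈ Z, f a = 1}

/-- The polar of a set `V` of functions: all `f` with `|f| ⊓ |v| = 1` pointwise for
every `v ∈ V`, where `|a| = a ⊔ a⁻¹`. -/
def polar {X G : Type*} [Lattice G] [Group G] (V : Set (X → G)) : Set (X → G) :=
  {f : X → G | ∀ v ∈ V, ∀ x : X, (f x ⊔ (f x)⁻¹) ⊓ (v x ⊔ (v x)⁻¹) = 1}

private lemma mabs_aux {G : Type*} [CommGroup G] [LinearOrder G] [IsOrderedMonoid G] (a : G) :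
    a ⊔ a⁻¹ = mabs a := rfl

/-- A polar is a 𝒦-kernel: `Ker (Skel (V^⊥)) = V^⊥`. -/
theorem polar_is_K_kernel {G X : Type*} [CommGroup G] [LinearOrder G] [IsOrderedMonoid G]
    (V : Set (X → G)) :
    Ker (Skel (polar V)) = polar V := by
  ext g
  constructor
  · intro hg v hv x
    rw [mabs_aux, mabs_aux]
    rcases eq_or_ne (v x) 1 with h | h
    · rw [h]
      simp [inf_eq_right.mpr (one_le_mabs (g x))]
    · have hx : x ∈ Skel (polar V) := by
        intro f hf
        have h1 := hf v hv x
        rw [mabs_aux, mabs_aux] at h1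
        by_contra hfx
        have : (1 : G) < mabs (f x) ⊓ mabs (v x) :=
          lt_inf_iff.mpr ⟨one_lt_mabs.mpr hfx, one_lt_mabs.mpr h⟩
        rw [h1] at this
        exact lt_irrefl _ this
      rw [hg x hx]
      simp [inf_eq_left.mpr (one_le_mabs (v x))]
  · intro hg x hx
    exact hx g hg
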